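/- Every general asynchronous transition is a most-permissive transition: if x ≠ y and for each i with x_i ≠ y_i we have y_i = f_i(x), then x →_MP y. -/
import Mathlib


/-- Vertex set of a sub-hypercube `h ∈ {0,1,*}^n`, encoded as `Fin n → Option Bool`
(`none` = free component `*`). -/
def verts {n : ℕ} (h : Fin n → Option Bool) : Set (Fin n → Bool) :=
  {x | ∀ i b, h i = some b → x i = b}

/-- `h` is `K`-closed by the Boolean network `f`. -/
def KClosed {n : ℕ} (f : (Fin n → Bool) → Fin n → Bool) (K : Set (Fin n))
    (h : Fin n → Option Bool) : Prop :=
  ∀ x ∈ verts h, ∀ i ∈ K, ∀ b, h i = some b → f x i = b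

/-- `h` is the smallest `K`-closed sub-hypercube containing `x`. -/
def SmallestClosed {n : ℕ} (f : (Fin n → Bool) → Fin n → Bool) (K : Set (Fin n))
    (x : Fin n → Bool) (h : Fin n → Option Bool) : Prop :=
  KClosed f K h ∧ x ∈ verts h ∧
    ∀ h', KClosed f K h' → x ∈ verts h' → verts h ⊆ verts h'

/-- Most Permissive transition `x →_MP y`. -/
def MPTrans {n : ℕ} (f : (Fin n → Bool) → Fin n → Bool) (x y : Fin n → Bool) : Prop :=
  ∃ (K : Set (Fin n)) (h : Fin n → Option Bool), SmallestClosed f K x h ∧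
    y ∈ verts h ∧ ∀ i ∈ K, ∃ z ∈ verts h, y i = f z i

/-- Every general asynchronous transition is an MP transition: if `x ≠ y` and
`y i = f x i` for every component `i` where `x` and `y` differ, then `x →_MP y`. -/
theorem stmt_6 {n : ℕ} (f : (Fin n → Bool) → Fin n → Bool) (x y : Fin n → Bool)
    (hne : x ≠ y) (hupd : ∀ i, x i ≠ y i → y i = f x i) : MPTrans f x y := by
  refine ⟨{i | x i ≠ y i}, fun i => if x i = y i then some (x i) else none, ⟨?_, ?_, ?_⟩, ?_, ?_⟩
  · -- KClosed: for i ∈ K, h i = none, vacuous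
    intro z _ i hi b hb
    simp only [if_neg hi] at hb
    exact absurd hb (by simp)
  · -- x ∈ verts h
    intro i b hb
    by_cases hxy : x i = y i
    · simp only [if_pos hxy] at hb; exact Option.some_inj.mp hb
    · simp [if_neg hxy] at hb
  · -- smallest
    intro h' hclosed hx z hz i b hb
    by_cases hi : x i = y i
    · -- h i = some (x i), so z i = x i; also h' i = some b with x i = b
      have hzx : z i = x i := hz i (x i) (by simp [hi])
      have := hx i b hb
      rw [hzx, this]
    · -- i ∈ K; show h' i = some b impossible
      exfalso
      have hfx := hclosed x hx i hi b hb
      have hxb := hx i b hb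
      exact hi (by rw [hxb, ← hfx, ← hupd i hi])
  · -- y ∈ verts h
    intro i b hb
    by_cases hxy : x i = y i
    · simp only [if_pos hxy] at hb
      rw [← hxy]; exact Option.some_inj.mp hb
    · simp [if_neg hxy] at hb
  · -- escape condition
    intro i hi
    refine ⟨x, ?_, hupd i hi⟩
    intro j b hb
    by_cases hxy : x j = y j
    · simp only [if_pos hxy] at hb; exact Option.some_inj.mp hb
    · simp [if_neg hxy] at hb
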